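/- Let p : ℝ → ℝ³ be differentiable at t with derivative ṗ, with ‖p(s)‖ = r_p for all s (r_p > 0 constant). Write i_p := p(t)/r_p = (i_px, i_py, i_pz) and assume ρ := √(i_px² + i_py²) > 0. Define i_E := (1/ρ) · (−i_py, i_px, 0) and i_N := i_p × i_E. Then the latitude Lat(s) := arcsin(p_z(s)/r_p) is differentiable at t with derivative ⟪ṗ, i_N⟫ / r_p. -/

import Mathlib

set_option maxHeartbeats 1000000


open Matrix
open scoped RealInnerProductSpace

/-- Latitude rate formula (Eq. (47)): the derivative of the IIP latitude is
⟪p', i_N⟫ / r_p, where i_N = i_p × i_E is the local North direction. -/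
theorem latitude_rate
    (r_p : ℝ) (hrp : 0 < r_p)
    (p : ℝ → EuclideanSpace ℝ (Fin 3)) (p' : EuclideanSpace ℝ (Fin 3)) (t : ℝ)
    (hp : HasDerivAt p p' t)
    (hnorm : ∀ s, ‖p s‖ = r_p)
    (hρ : 0 < Real.sqrt ((p t 0 / r_p) ^ 2 + (p t 1 / r_p) ^ 2)) :
    HasDerivAt (fun s => Real.arcsin (p s 2 / r_p))
      (⟪p', (WithLp.toLp 2 ((WithLp.ofLp ((1 / r_p) • p t)) ⨯₃
          ((1 / Real.sqrt ((p t 0 / r_p) ^ 2 + (p t 1 / r_p) ^ 2)) •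
            ![-(p t 1 / r_p), p t 0 / r_p, 0])) : EuclideanSpace ℝ (Fin 3))⟫ / r_p)
      t := by
  set x := p t 0 with hx
  set y := p t 1 with hy
  set z := p t 2 with hz
  set ρ := Real.sqrt ((x / r_p) ^ 2 + (y / r_p) ^ 2) with hρdef
  -- norm identity
  have hsum : x ^ 2 + y ^ 2 + z ^ 2 = r_p ^ 2 := by
    have h2 : (⟪p t, p t⟫ : ℝ) = r_p ^ 2 := by
      rw [real_inner_self_eq_norm_sq, hnorm t]
    rw [PiLp.inner_apply] at h2
    simpa [PiLp.inner_apply, Fin.sum_univ_three, RCLike.inner_apply, sq,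
      mul_comm] using h2
  have hρsq : ρ ^ 2 = (x / r_p) ^ 2 + (y / r_p) ^ 2 :=
    Real.sq_sqrt (by positivity)
  -- 1 - (z/r)^2 = ρ^2
  have hone : 1 - (z / r_p) ^ 2 = ρ ^ 2 := by
    rw [hρsq]
    field_simp
    linarith
  have hz2lt : (z / r_p) ^ 2 < 1 := by nlinarith [hρ, hρsq]
  have hne1 : z / r_p ≠ 1 := by nlinarith [hz2lt]
  have hnem1 : z / r_p ≠ -1 := by nlinarith [hz2lt]
  -- orthogonality of p and p'
  have horth : x * p' 0 + y * p' 1 + z * p' 2 = 0 := by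
    have hc : HasDerivAt (fun s => (⟪p s, p s⟫ : ℝ)) (⟪p t, p'⟫ + ⟪p', p t⟫) t :=
      hp.inner ℝ hp
    have hconst : (fun s => (⟪p s, p s⟫ : ℝ)) = fun _ => r_p ^ 2 := by
      funext s
      rw [real_inner_self_eq_norm_sq, hnorm s]
    rw [hconst] at hc
    have h0 : ⟪p t, p'⟫ + ⟪p', p t⟫ = 0 :=
      (hc.unique (hasDerivAt_const t _))
    have hcomm := real_inner_comm (p t) p'
    have h0' : (⟪p t, p'⟫ : ℝ) = 0 := by linarith
    simpa [PiLp.inner_apply, Fin.sum_univ_three, RCLike.inner_apply,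
      ← hx, ← hy, ← hz, mul_comm] using h0'
  -- derivative of the z coordinate
  have hz' : HasDerivAt (fun s => p s 2) (p' 2) t := by
    have := (EuclideanSpace.proj (2 : Fin 3) (𝕜 := ℝ)).hasFDerivAt.comp t hp.hasFDerivAt
    simpa [Function.comp_def] using this.hasDerivAt
  have harc : HasDerivAt (fun s => Real.arcsin (p s 2 / r_p))
      (1 / Real.sqrt (1 - (z / r_p) ^ 2) * (p' 2 / r_p)) t :=
    by have h := (Real.hasDerivAt_arcsin (x := p t 2 / r_p) hnem1 hne1).comp t (hz'.div_const r_p); exact h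
  convert harc using 1
  rw [hone, Real.sqrt_sq hρ.le]
  -- compute the inner product
  have hcross : ⟪p', (WithLp.toLp 2 ((WithLp.ofLp ((1 / r_p) • p t)) ⨯₃
          ((1 / ρ) • ![-(y / r_p), x / r_p, 0])) : EuclideanSpace ℝ (Fin 3))⟫
      = p' 0 * ((1 / r_p * y) * (1 / ρ * 0) - (1 / r_p * z) * (1 / ρ * (x / r_p)))
      + p' 1 * ((1 / r_p * z) * (1 / ρ * (-(y / r_p))) - (1 / r_p * x) * (1 / ρ * 0))
      + p' 2 * ((1 / r_p * x) * (1 / ρ * (x / r_p)) - (1 / r_p * y) * (1 / ρ * (-(y / r_p)))) := by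
    simp [PiLp.inner_apply, Fin.sum_univ_three, RCLike.inner_apply, cross_apply,
      ← hx, ← hy, ← hz]
    ring
  rw [hcross]
  have hρne : ρ ≠ 0 := hρ.ne'
  have hrne : r_p ≠ 0 := hrp.ne'
  field_simp
  linear_combination p' 2 * hsum - z * horth
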